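/- Let x = aub (a,b ∈ Σ) be a word of length m ≥ 2 that is a MAW of y₃ = y₁#y₂ with x ∉ MAW(y₁) ∪ MAW(y₂), and suppose au occurs in y₁ but not in y₂. If a occurs in y₂ and x[0..t] is the longest prefix of au that is a factor of y₂, then t < m−1 and x[0..t+1] is a MAW of y₂ that is a prefix of au. -/

import Mathlib

/-- `x` is a minimal absent word (MAW) of `y`: `x` is not a factor of `y`,
but every proper factor of `x` is a factor of `y`. -/
def MAW {α : Type*} (y x : List α) : Prop :=
  ¬ x <:+: y ∧ ∀ f : List α, f <:+: x → f ≠ x → f <:+: y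

/-- MAW of length at most `ℓ`. -/
def MAWle {α : Type*} (ℓ : ℕ) (y x : List α) : Prop :=
  MAW y x ∧ x.length ≤ ℓ

/-- Reduced set: MAWs of `u` (length ≤ ℓ) containing no MAW of `v` (length ≤ ℓ) as a factor. -/
def RMAW {α : Type*} (ℓ : ℕ) (u v x : List α) : Prop :=
  MAWle ℓ u x ∧ ∀ w : List α, MAWle ℓ v w → ¬ w <:+: x

lemma proper_infix_cases {α : Type*} {f l : List α} (h : f <:+: l) (hne : f ≠ l) :
    f <:+: l.dropLast ∨ f <:+: l.tail := by
  obtain ⟨s, t', rfl⟩ := h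
  match s, t' with
  | [], [] => simp at hne
  | [], (d :: t'') =>
      left
      refine ⟨[], (d :: t'').dropLast, ?_⟩
      rw [show ([]:List α) ++ f ++ (d::t'') = ([] ++ f) ++ (d::t'') from by simp,
        List.dropLast_append_of_ne_nil (by simp)]
  | (c :: s'), t' =>
      right
      exact ⟨s', t', by simp⟩

lemma infix_split {α : Type*} {s y₁ y₂ : List α} {c : α}
    (h : s <:+: y₁ ++ c :: y₂) (hc : c ∉ s) : s <:+: y₁ ∨ s <:+: y₂ := by
  obtain ⟨l, r, hl⟩ := h
  rcases le_or_gt (l.length + s.length) y₁.length with hle | hgt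
  · left
    refine ⟨l, r.take (y₁.length - l.length - s.length), ?_⟩
    have : (l ++ s ++ r).take y₁.length = l ++ s ++ r.take (y₁.length - l.length - s.length) := by
      rw [List.append_assoc, List.take_append,
        List.take_of_length_le (by omega), List.take_append,
        List.take_of_length_le (by omega), List.append_assoc]
    rw [← this, hl, List.take_left]
  · rcases le_or_gt (y₁.length + 1) l.length with hle2 | hgt2
    · right
      refine ⟨l.drop (y₁.length + 1), r, ?_⟩
      have : (l ++ s ++ r).drop (y₁.length + 1) = l.drop (y₁.length + 1) ++ s ++ r := by
        rw [List.append_assoc, List.drop_append,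
          Nat.sub_eq_zero_of_le (by omega), List.drop_zero, List.append_assoc]
      rw [← this, hl]
      simp [List.drop_append, Nat.sub_eq_zero_of_le (le_refl _)]
    · exfalso
      apply hc
      have h2 : (l ++ s ++ r)[y₁.length]? = some c := by
        rw [hl, List.getElem?_append_right (le_refl _)]
        simp
      rw [List.append_assoc, List.getElem?_append_right (by omega),
        List.getElem?_append_left (by omega)] at h2
      exact List.mem_iff_getElem?.mpr ⟨_, h2⟩

theorem longest_prefix_extension_is_maw {α : Type*} (S : Set α) (hash : α)
    (hhash : hash ∉ S) (y₁ y₂ : List α)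
    (hy₁ : ∀ a ∈ y₁, a ∈ S) (hy₂ : ∀ a ∈ y₂, a ∈ S)
    (a b : α) (ha : a ∈ S) (hb : b ∈ S) (u : List α) (hu : ∀ c ∈ u, c ∈ S)
    (hx : MAW (y₁ ++ hash :: y₂) (a :: u ++ [b]))
    (h₁ : ¬ MAW y₁ (a :: u ++ [b])) (h₂ : ¬ MAW y₂ (a :: u ++ [b]))
    (hau₁ : (a :: u) <:+: y₁) (hau₂ : ¬ (a :: u) <:+: y₂)
    (haocc : [a] <:+: y₂)
    (t : ℕ) (htle : t + 1 ≤ (a :: u).length)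
    (htfac : (a :: u ++ [b]).take (t + 1) <:+: y₂)
    (htmax : ∀ s : List α, s <+: (a :: u) → s <:+: y₂ → s.length ≤ t + 1) :
    t < (a :: u ++ [b]).length - 1 ∧
      MAW y₂ ((a :: u ++ [b]).take (t + 2)) ∧
      (a :: u ++ [b]).take (t + 2) <+: (a :: u) := by
  -- t + 1 ≤ u.length
  have t1le : t + 1 ≤ u.length := by
    by_contra hcon
    have ht1 : t + 1 = u.length + 1 := by simp at htle; omega
    apply hau₂
    have : (a :: u ++ [b]).take (t + 1) = a :: u := by
      rw [ht1]
      show (a :: (u ++ [b])).take (u.length + 1) = a :: u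
      rw [List.take_succ_cons]
      congr 1
      exact List.take_left
    rwa [this] at htfac
  -- descriptions of the take's
  have hq_eq : (a :: u ++ [b]).take (t + 1) = a :: u.take t := by
    show (a :: (u ++ [b])).take (t + 1) = a :: u.take t
    rw [List.take_succ_cons]
    congr 1
    rw [List.take_append, Nat.sub_eq_zero_of_le (by omega)]
    simp
  have hp_eq : (a :: u ++ [b]).take (t + 2) = a :: u.take (t + 1) := by
    show (a :: (u ++ [b])).take (t + 1 + 1) = a :: u.take (t + 1)
    rw [List.take_succ_cons]
    congr 1
    rw [List.take_append, Nat.sub_eq_zero_of_le (by omega)]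
    simp
  set p : List α := (a :: u ++ [b]).take (t + 2) with hp
  set q : List α := (a :: u ++ [b]).take (t + 1) with hq
  have htu : t < u.length := by omega
  have hp_decomp : p = q ++ [u[t]] := by
    rw [hp_eq, hq_eq]
    rw [List.take_succ, List.getElem?_eq_getElem htu]
    simp
  -- p is a prefix of a :: u
  have hpre : p <+: a :: u := by
    rw [hp_eq]
    exact List.cons_prefix_cons.mpr ⟨rfl, List.take_prefix _ _⟩
  -- u ++ [b] occurs in y₂
  have hub₂ : (u ++ [b]) <:+: y₂ := by
    have hinf : (u ++ [b]) <:+: a :: u ++ [b] := ⟨[a], [], by simp⟩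
    have hne : (u ++ [b]) ≠ a :: u ++ [b] := by
      intro h; apply_fun List.length at h; simp at h
    have hy₃ := hx.2 (u ++ [b]) hinf hne
    have hnm : hash ∉ u ++ [b] := by
      intro hm
      rcases List.mem_append.mp hm with hm | hm
      · exact hhash (hu _ hm)
      · simp at hm; subst hm; exact hhash hb
    rcases infix_split hy₃ hnm with hc1 | hc2
    · exfalso
      apply h₁
      constructor
      · intro hcon
        exact hx.1 (hcon.trans (List.prefix_append y₁ (hash :: y₂)).isInfix)
      · intro f hf hfne
        rcases proper_infix_cases hf hfne with hd | hd
        · have : (a :: u ++ [b]).dropLast = a :: u := by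
            show (a :: (u ++ [b])).dropLast = a :: u
            rw [show a :: (u ++ [b]) = (a :: u) ++ [b] from by simp,
              List.dropLast_concat]
          rw [this] at hd
          exact hd.trans hau₁
        · have : (a :: u ++ [b]).tail = u ++ [b] := rfl
          rw [this] at hd
          exact hd.trans hc1
    · exact hc2
  -- the tail of p occurs in y₂
  have htail₂ : u.take (t + 1) <:+: y₂ :=
    ((u.take_prefix (t+1)).isInfix.trans (List.infix_append [] u [b])).trans hub₂
  refine ⟨by simp; omega, ⟨?_, ?_⟩, hpre⟩
  · intro hcon
    have := htmax p hpre hcon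
    rw [hp_eq] at this
    simp at this
    omega
  · intro f hf hfne
    rcases proper_infix_cases hf hfne with hd | hd
    · rw [hp_decomp, List.dropLast_concat] at hd
      exact hd.trans htfac
    · have : p.tail = u.take (t + 1) := by rw [hp_eq]; rfl
      rw [this] at hd
      exact hd.trans htail₂
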